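/- Let G be a simple graph on a finite vertex set V, and let A ⊆ V be a set of vertices such that no edge of G is incident to any vertex of A. For S' ⊆ V, let G[S'] denote the graph obtained from G by adding all edges between distinct vertices of S'. Then the following are equivalent: (i) V ∖ A is not a clique of G; (ii) there exists a partition (A', S', B') of V with A ⊊ A' and B' nonempty such that, in the graph G[S'], every walk from a vertex of A' to a vertex of B' passes through a vertex of S' (i.e., S' separates A' from B' in G[S']). -/

import Mathlib

/-- The graph obtained from `G` by adding all edges between distinct vertices of `S'`
(turning `S'` into a clique). -/
def withClique {V : Type*} (G : SimpleGraph V) (S' : Set V) : SimpleGraph V where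
  Adj i j := i ≠ j ∧ (G.Adj i j ∨ (i ∈ S' ∧ j ∈ S'))
  symm := by
    constructor
    rintro i j ⟨h1, h2⟩
    refine ⟨h1.symm, ?_⟩
    rcases h2 with h | ⟨ha, hb⟩
    · exact Or.inl h.symm
    · exact Or.inr ⟨hb, ha⟩
  loopless := by constructor; rintro i ⟨h, -⟩; exact h rfl

/-- `S` separates `A` from `B` in `G`: every walk from a vertex of `A` to a vertex of `B`
meets `S`. -/
def Separates {V : Type*} (G : SimpleGraph V) (A B S : Set V) : Prop :=
  ∀ a ∈ A, ∀ b ∈ B, ∀ w : G.Walk a b, ∃ v ∈ S, v ∈ w.support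

/-- **Existence of a further proper decomposition.**
Let `G` be a simple graph on a finite vertex set `V` and let `A` be a set of vertices with no
incident edges.  Then `V ∖ A` fails to be a clique of `G` if and only if there is a partition
`(A', S', B')` of `V` with `A ⊊ A'` and `B'` nonempty such that `S'` separates `A'` from `B'`
in the graph obtained from `G` by turning `S'` into a clique. -/

private lemma walk_meets_aux {V : Type*} (G : SimpleGraph V) (A S : Set V)
    (hA : ∀ a ∈ A, ∀ b : V, ¬ G.Adj a b) (x y : V)
    (hyA : y ∉ A) (hxy : x ≠ y) (hS : ∀ c, G.Adj x c → c ∈ S) :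
    ∀ a b, ∀ w : (withClique G S).Walk a b, a ∈ A ∪ {x} → b = y →
      ∃ v ∈ S, v ∈ w.support := by
  intro a b w
  induction w with
  | nil =>
    rintro ha rfl
    exfalso
    rcases ha with ha | ha
    · exact hyA ha
    · exact hxy ha.symm
  | @cons u c d h p ih =>
    rintro ha rfl
    obtain ⟨hne, hG | ⟨huS, hcS⟩⟩ := h
    · rcases ha with ha | ha
      · exact absurd hG (hA u ha c)
      · rcases ha with rfl
        exact ⟨c, hS c hG, List.mem_cons_of_mem u p.start_mem_support⟩
    · exact ⟨u, huS, SimpleGraph.Walk.start_mem_support _⟩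

theorem not_clique_iff_exists_decomposition
    {V : Type*} [Fintype V] [DecidableEq V]
    (G : SimpleGraph V) (A : Set V)
    (hA : ∀ a ∈ A, ∀ b : V, ¬ G.Adj a b) :
    ¬ G.IsClique Aᶜ ↔
      ∃ A' S' B' : Set V,
        Disjoint A' S' ∧ Disjoint A' B' ∧ Disjoint S' B' ∧
        A' ∪ S' ∪ B' = Set.univ ∧
        A ⊂ A' ∧ B'.Nonempty ∧
        Separates (withClique G S') A' B' S' := by
  constructor
  · intro hnc
    simp only [SimpleGraph.isClique_iff, Set.Pairwise, not_forall] at hnc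
    obtain ⟨x, hx, y, hy, hcon⟩ := hnc
    obtain ⟨hxy, hnadj⟩ := hcon
    rw [Set.mem_compl_iff] at hx hy
    refine ⟨A ∪ {x}, (A ∪ {x, y})ᶜ, {y}, ?_, ?_, ?_, ?_, ?_, ⟨y, rfl⟩, ?_⟩
    · rw [Set.disjoint_compl_right_iff_subset]
      intro v hv
      rcases hv with hv | hv
      · exact Or.inl hv
      · exact Or.inr (Or.inl hv)
    · rw [Set.disjoint_singleton_right]
      rintro (h | h)
      · exact hy h
      · exact hxy h.symm
    · rw [Set.disjoint_singleton_right, Set.mem_compl_iff, not_not]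
      exact Or.inr (Or.inr rfl)
    · ext v
      simp only [Set.mem_union, Set.mem_compl_iff, Set.mem_singleton_iff,
        Set.mem_insert_iff, Set.mem_univ, iff_true]
      by_cases hvA : v ∈ A
      · exact Or.inl (Or.inl (Or.inl hvA))
      by_cases hvx : v = x
      · exact Or.inl (Or.inl (Or.inr hvx))
      by_cases hvy : v = y
      · exact Or.inr hvy
      · exact Or.inl (Or.inr (by tauto))
    · constructor
      · exact Set.subset_union_left
      · intro hsub
        exact hx (hsub (Or.inr rfl))
    · intro a ha b hb w
      rcases hb with rfl
      refine walk_meets_aux G A _ hA x b hy hxy ?_ a b w ha rfl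
      intro c hG
      simp only [Set.mem_compl_iff, Set.mem_union, Set.mem_insert_iff,
        Set.mem_singleton_iff]
      push_neg
      refine ⟨fun hcA => hA c hcA x hG.symm, fun h => hG.ne' h, ?_⟩
      rintro rfl
      exact hnadj hG
  · rintro ⟨A', S', B', dAS, dAB, dSB, hun, hsub, ⟨b, hb⟩, hsep⟩ hclique
    obtain ⟨hAA', hns⟩ := hsub
    obtain ⟨a', ha'A', ha'A⟩ := Set.not_subset.mp hns
    have hbA : b ∉ A := fun h => dAB.ne_of_mem (hAA' h) hb rfl
    have hne : a' ≠ b := fun h => dAB.ne_of_mem ha'A' hb h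
    have hadj := hclique (Set.mem_compl ha'A) (Set.mem_compl hbA) hne
    obtain ⟨v, hvS, hvsupp⟩ := hsep a' ha'A' b hb
      (SimpleGraph.Walk.cons ⟨hne, Or.inl hadj⟩ SimpleGraph.Walk.nil)
    change v ∈ [a', b] at hvsupp
    simp only [SimpleGraph.Walk.support_cons, SimpleGraph.Walk.support_nil,
      List.mem_cons, List.mem_singleton, List.not_mem_nil, or_false] at hvsupp
    rcases hvsupp with rfl | rfl
    · exact dAS.ne_of_mem ha'A' hvS rfl
    · exact dSB.ne_of_mem hvS hb rfl
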